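/- arXiv:2401.11199 — 2 statements merged into one kernel-verified Lean document; each statement's English description precedes it below -/
import Mathlib

section
/- Under the assumptions of PDF projection, the pushforward of the projected density G(x) = (p₀(x)/p₀z(T(x))) g(T(x)) under T equals g. That is, for every measurable set A ⊆ ℝ^M, ∫_{T⁻¹(A)} G(x) dx = ∫_A g(z) dz. -/
open MeasureTheory
open scoped NNReal ENNReal

/-- The pushforward under `T` of the projected density
`G(x) = p₀(x)/p₀z(T x) · g(T x)` equals `g`. -/
theorem pdf_projection_pushforward_is_g
    (N M : ℕ) (hMN : M < N)
    (T : (Fin N → ℝ) → (Fin M → ℝ)) (hT : Measurable T)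
    (p₀ : (Fin N → ℝ) → ℝ) (p₀z : (Fin M → ℝ) → ℝ) (g : (Fin M → ℝ) → ℝ)
    (hp₀_nonneg : ∀ x, 0 ≤ p₀ x) (hp₀_meas : Measurable p₀)
    (hp₀_int : ∫ x, p₀ x = 1)
    (hp₀z_meas : Measurable p₀z)
    (hpush : ∀ A : Set (Fin M → ℝ), MeasurableSet A →
      ∫ z in A, p₀z z = ∫ x in T ⁻¹' A, p₀ x)
    (hg_nonneg : ∀ z, 0 ≤ g z) (hg_meas : Measurable g)
    (hg_int : ∫ z, g z = 1)
    (hp₀z_pos : ∀ z, g z ≠ 0 → 0 < p₀z z) :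
    ∀ A : Set (Fin M → ℝ), MeasurableSet A →
      ∫ x in T ⁻¹' A, (p₀ x / p₀z (T x)) * g (T x) = ∫ z in A, g z := by
  intro A hA
  -- p₀ is integrable
  have hp₀I : Integrable p₀ := by
    by_contra h
    rw [integral_undef h] at hp₀_int
    norm_num at hp₀_int
  -- p₀z is integrable
  have huniv := hpush Set.univ MeasurableSet.univ
  simp only [Set.preimage_univ, setIntegral_univ] at huniv
  have hp₀zI : Integrable p₀z := by
    by_contra h
    rw [integral_undef h, hp₀_int] at huniv
    norm_num at huniv
  -- p₀z is a.e. nonnegative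
  have hp₀z_ae : 0 ≤ᵐ[volume] p₀z := by
    apply ae_nonneg_of_forall_setIntegral_nonneg hp₀zI
    intro s hs _
    rw [hpush s hs]
    exact setIntegral_nonneg (hT hs) fun x _ => hp₀_nonneg x
  set μN : Measure (Fin N → ℝ) :=
    volume.withDensity fun x => ENNReal.ofReal (p₀ x) with hμN
  set ν : Measure (Fin M → ℝ) := μN.map T with hν
  have hνeq : ν = volume.withDensity fun z => ENNReal.ofReal (p₀z z) := by
    ext B hB
    rw [hν, Measure.map_apply hT hB, hμN,
      withDensity_apply _ (hT hB), withDensity_apply _ hB,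
      ← ofReal_integral_eq_lintegral_ofReal (hp₀I.integrableOn)
        (Filter.Eventually.of_forall fun x => hp₀_nonneg x),
      ← ofReal_integral_eq_lintegral_ofReal (hp₀zI.integrableOn)
        (ae_restrict_of_ae hp₀z_ae),
      hpush B hB]
  -- the projected function on the target side
  set F : (Fin M → ℝ) → ℝ := A.indicator fun z => g z / p₀z z with hF
  have hFmeas : Measurable F := (hg_meas.div hp₀z_meas).indicator hA
  have h1 : ∫ x in T ⁻¹' A, (p₀ x / p₀z (T x)) * g (T x)
      = ∫ x, p₀ x * F (T x) := by
    rw [← integral_indicator (hT hA)]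
    congr 1
    ext x
    by_cases hx : T x ∈ A
    · simp only [hF, Set.indicator_of_mem hx,
        Set.indicator_of_mem (show x ∈ T ⁻¹' A from hx)]
      ring
    · simp only [hF, Set.indicator_of_notMem hx,
        Set.indicator_of_notMem (show x ∉ T ⁻¹' A from hx), mul_zero]
  have h2 : ∫ x, F (T x) ∂μN = ∫ x, p₀ x * F (T x) := by
    rw [hμN]
    have : (fun x => ENNReal.ofReal (p₀ x))
        = fun x => ((Real.toNNReal (p₀ x) : ℝ≥0) : ℝ≥0∞) := rfl
    rw [this, integral_withDensity_eq_integral_smul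
      hp₀_meas.real_toNNReal]
    congr 1
    ext x
    rw [NNReal.smul_def, Real.coe_toNNReal _ (hp₀_nonneg x), smul_eq_mul]
  have h3 : ∫ x, F (T x) ∂μN = ∫ z, F z ∂ν := by
    rw [hν, integral_map hT.aemeasurable hFmeas.aestronglyMeasurable]
  have h4 : ∫ z, F z ∂ν = ∫ z in A, g z := by
    rw [hνeq]
    have : (fun z => ENNReal.ofReal (p₀z z))
        = fun z => ((Real.toNNReal (p₀z z) : ℝ≥0) : ℝ≥0∞) := rfl
    rw [this, integral_withDensity_eq_integral_smul
      hp₀z_meas.real_toNNReal, ← integral_indicator hA]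
    apply integral_congr_ae
    filter_upwards [hp₀z_ae] with z hz
    rw [NNReal.smul_def, Real.coe_toNNReal _ hz, smul_eq_mul]
    by_cases hzA : z ∈ A
    · rw [hF, Set.indicator_of_mem hzA, Set.indicator_of_mem hzA]
      by_cases hg0 : g z = 0
      · simp [hg0]
      · field_simp [(hp₀z_pos z hg0).ne']
    · rw [hF, Set.indicator_of_notMem hzA, Set.indicator_of_notMem hzA, mul_zero]
  rw [h1, ← h2, h3, h4]
end

section
/- Maximum likelihood fitting of the projected PDF decomposes the divergence: for fixed T and g, E_{x∼p}[log G(x)] = E_{x∼p}[log p(x)] − D(p ∥ p₀) + D(p_T ∥ p₀_T) − D(p_T ∥ g), where p_T and p₀_T are pushforwards of p and p₀ under T and G(x) = (p₀(x)/p₀_T(T(x))) g(T(x)). Consequently, maximizing the expected log-likelihood of G over (T, g) simultaneously maximizes the output divergence D(p_T ∥ p₀_T) and drives p_T toward g. -/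
open MeasureTheory

/-- KL divergence between densities: `D(p‖q) = ∫ p log(p/q)`. -/
noncomputable def klDivDens {n : ℕ} (p q : (Fin n → ℝ) → ℝ) : ℝ :=
  ∫ x, p x * Real.log (p x / q x)

/-- Decomposition of the expected log-likelihood of the projected PDF
`G(x) = (p₀(x)/p₀T(T x)) g(T x)`:
`E_p[log G] = E_p[log p] − D(p‖p₀) + D(pT‖p₀T) − D(pT‖g)`. -/
theorem projected_pdf_loglik_decomposition
    (N M : ℕ)
    (T : (Fin N → ℝ) → (Fin M → ℝ)) (hT : Measurable T)
    (p p₀ : (Fin N → ℝ) → ℝ) (pT p₀T g : (Fin M → ℝ) → ℝ)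
    (hp_nonneg : ∀ x, 0 ≤ p x) (hp_meas : Measurable p) (hp_int : ∫ x, p x = 1)
    (hp₀_nonneg : ∀ x, 0 ≤ p₀ x) (hp₀_meas : Measurable p₀) (hp₀_int : ∫ x, p₀ x = 1)
    (hg_nonneg : ∀ z, 0 ≤ g z) (hg_meas : Measurable g) (hg_int : ∫ z, g z = 1)
    (hpT_meas : Measurable pT) (hp₀T_meas : Measurable p₀T)
    -- pT and p₀T are the pushforward densities of p and p₀ under T
    (hpushp : ∀ A : Set (Fin M → ℝ), MeasurableSet A →
      ∫ z in A, pT z = ∫ x in T ⁻¹' A, p x)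
    (hpushp₀ : ∀ A : Set (Fin M → ℝ), MeasurableSet A →
      ∫ z in A, p₀T z = ∫ x in T ⁻¹' A, p₀ x)
    -- positivity where needed
    (hp_pos : ∀ x, p x ≠ 0 → 0 < p₀ x)
    (hpT_pos : ∀ z, pT z ≠ 0 → 0 < p₀T z ∧ 0 < g z)
    -- all divergences and expectations are finite (integrability)
    (h1 : Integrable fun x => p x * Real.log ((p₀ x / p₀T (T x)) * g (T x)))
    (h2 : Integrable fun x => p x * Real.log (p x))
    (h3 : Integrable fun x => p x * Real.log (p x / p₀ x))
    (h4 : Integrable fun z => pT z * Real.log (pT z / p₀T z))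
    (h5 : Integrable fun z => pT z * Real.log (pT z / g z)) :
    ∫ x, p x * Real.log ((p₀ x / p₀T (T x)) * g (T x)) =
      (∫ x, p x * Real.log (p x)) - klDivDens p p₀ +
        klDivDens pT p₀T - klDivDens pT g := by
  -- p is integrable (else its integral would be 0, not 1)
  have hp_intg : Integrable p := by
    by_contra h
    rw [integral_undef h] at hp_int
    norm_num at hp_int
  -- pT is a.e. nonnegative
  set B : ℕ → Set (Fin M → ℝ) := fun n =>
    ({z | pT z < 0} ∩ {z | -(n : ℝ) ≤ pT z}) ∩ Metric.closedBall 0 n with hBdef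
  have hBm : ∀ n, MeasurableSet (B n) := fun n =>
    ((measurableSet_lt hpT_meas measurable_const).inter
      (measurableSet_le measurable_const hpT_meas)).inter measurableSet_closedBall
  have hBfin : ∀ n : ℕ, volume (B n) ≠ ⊤ := fun n =>
    ((measure_mono Set.inter_subset_right).trans_lt
      (isCompact_closedBall (0 : Fin M → ℝ) n).measure_lt_top).ne
  have hBnull : ∀ n : ℕ, volume (B n) = 0 := by
    intro n
    have hint : IntegrableOn pT (B n) := by
      apply Measure.integrableOn_of_bounded (hBfin n) hpT_meas.aestronglyMeasurable (M := n)
      filter_upwards [ae_restrict_mem (hBm n)] with z hz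
      have hz1 : pT z < 0 := hz.1.1
      have hz2 : -(n : ℝ) ≤ pT z := hz.1.2
      rw [Real.norm_eq_abs, abs_of_nonpos hz1.le]
      linarith
    have h0 : ∫ z in B n, pT z = 0 := by
      refine le_antisymm (setIntegral_nonpos (hBm n) fun z hz => hz.1.1.le) ?_
      rw [hpushp _ (hBm n)]
      exact setIntegral_nonneg (hT (hBm n)) fun x _ => hp_nonneg x
    have hintneg : IntegrableOn (fun z => -pT z) (B n) := hint.neg
    have hnn : 0 ≤ᵐ[volume.restrict (B n)] fun z => -pT z := by
      filter_upwards [ae_restrict_mem (hBm n)] with z hz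
      have hz1 : pT z < 0 := hz.1.1
      simp only [Pi.zero_apply]
      linarith
    have hz0 : ∫ z in B n, -pT z = 0 := by rw [integral_neg, h0, neg_zero]
    have hae : (fun z => -pT z) =ᵐ[volume.restrict (B n)] 0 :=
      (setIntegral_eq_zero_iff_of_nonneg_ae hnn hintneg).mp hz0
    have hfalse : ∀ᵐ z ∂(volume.restrict (B n)), False := by
      filter_upwards [hae, ae_restrict_mem (hBm n)] with z hz hzB
      have : pT z < 0 := hzB.1.1
      simp only [Pi.zero_apply, neg_eq_zero] at hz
      exact absurd hz this.ne
    have : volume.restrict (B n) Set.univ = 0 := by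
      simpa [ae_iff] using hfalse
    simpa [Measure.restrict_apply_univ] using this
  have hpT_ae_nonneg : 0 ≤ᵐ[(volume : Measure (Fin M → ℝ))] pT := by
    rw [Filter.EventuallyLE, ae_iff]
    refine measure_mono_null (fun z hz => ?_) (measure_iUnion_null hBnull)
    simp only [Pi.zero_apply, not_le, Set.mem_setOf_eq] at hz
    obtain ⟨n, hn⟩ := exists_nat_ge (max (‖z‖) (-pT z))
    refine Set.mem_iUnion.2 ⟨n, ⟨⟨hz, ?_⟩, ?_⟩⟩
    · simp only [Set.mem_setOf_eq]
      have := (max_le_iff.1 hn).2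
      linarith
    · rw [Metric.mem_closedBall, dist_zero_right]
      exact (le_max_left _ _).trans hn
  -- pT is integrable
  have hpT_intg : Integrable pT := by
    refine ⟨hpT_meas.aestronglyMeasurable, ?_⟩
    rw [HasFiniteIntegral]
    have heq : ∫⁻ z, ‖pT z‖ₑ = ∫⁻ z, ENNReal.ofReal (pT z) := by
      refine lintegral_congr_ae ?_
      filter_upwards [hpT_ae_nonneg] with z hz
      exact Real.enorm_eq_ofReal hz
    rw [heq]
    set C : ℕ → Set (Fin M → ℝ) := fun n => {z | pT z ≤ n} ∩ Metric.closedBall 0 n with hCdef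
    have hCm : ∀ n, MeasurableSet (C n) := fun n =>
      (measurableSet_le hpT_meas measurable_const).inter measurableSet_closedBall
    have hCmono : Monotone C := by
      intro a b hab
      refine Set.inter_subset_inter (fun z hz => ?_)
        (Metric.closedBall_subset_closedBall (by exact_mod_cast hab))
      simp only [Set.mem_setOf_eq] at hz ⊢
      exact hz.trans (by exact_mod_cast hab)
    have hCunion : (⋃ n, C n) = Set.univ := by
      ext z
      simp only [Set.mem_iUnion, Set.mem_univ, iff_true]
      obtain ⟨n, hn⟩ := exists_nat_ge (max (pT z) ‖z‖)
      exact ⟨n, (le_max_left _ _).trans hn,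
        by rw [Metric.mem_closedBall, dist_zero_right]; exact (le_max_right _ _).trans hn⟩
    have key : ∀ n : ℕ, ∫⁻ z in C n, ENNReal.ofReal (pT z) ≤ 1 := by
      intro n
      have hintC : IntegrableOn pT (C n) := by
        apply Measure.integrableOn_of_bounded (M := n)
          (((measure_mono Set.inter_subset_right).trans_lt
            (isCompact_closedBall (0 : Fin M → ℝ) n).measure_lt_top).ne)
          hpT_meas.aestronglyMeasurable
        filter_upwards [ae_restrict_mem (hCm n), ae_restrict_of_ae hpT_ae_nonneg] with z hz h0
        rw [Real.norm_eq_abs, abs_of_nonneg h0]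
        exact hz.1
      rw [← ofReal_integral_eq_lintegral_ofReal hintC (ae_restrict_of_ae hpT_ae_nonneg)]
      rw [hpushp _ (hCm n)]
      have : ∫ x in T ⁻¹' C n, p x ≤ ∫ x, p x :=
        setIntegral_le_integral hp_intg (ae_of_all _ hp_nonneg)
      rw [hp_int] at this
      calc ENNReal.ofReal (∫ x in T ⁻¹' C n, p x) ≤ ENNReal.ofReal 1 :=
            ENNReal.ofReal_le_ofReal this
        _ = 1 := ENNReal.ofReal_one
    calc ∫⁻ z, ENNReal.ofReal (pT z)
        = ∫⁻ z in ⋃ n, C n, ENNReal.ofReal (pT z) := by rw [hCunion, setLIntegral_univ]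
      _ = ⨆ n, ∫⁻ z in C n, ENNReal.ofReal (pT z) :=
          setLIntegral_iUnion_of_directed _ hCmono.directed_le
      _ ≤ 1 := iSup_le key
      _ < ⊤ := ENNReal.one_lt_top
  -- the weighted measures
  set μ : Measure (Fin N → ℝ) := volume.withDensity (fun x => ENNReal.ofReal (p x)) with hμ
  set κ : Measure (Fin M → ℝ) := volume.withDensity (fun z => ENNReal.ofReal (pT z)) with hκ
  have hmap : μ.map T = κ := by
    ext A hA
    rw [Measure.map_apply hT hA, hμ, withDensity_apply _ (hT hA), hκ, withDensity_apply _ hA,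
      ← ofReal_integral_eq_lintegral_ofReal hp_intg.integrableOn
        (ae_restrict_of_ae (Filter.Eventually.of_forall hp_nonneg)),
      ← ofReal_integral_eq_lintegral_ofReal hpT_intg.integrableOn
        (ae_restrict_of_ae hpT_ae_nonneg),
      hpushp A hA]
  -- change of variables
  have hchange : ∀ φ : (Fin M → ℝ) → ℝ, Measurable φ →
      ∫ x, p x * φ (T x) = ∫ z, pT z * φ z := by
    intro φ hφ
    have hwd1 : μ = volume.withDensity (fun x => ((Real.toNNReal (p x) : NNReal) : ENNReal)) := rfl
    have hwd2 : κ = volume.withDensity (fun z => ((Real.toNNReal (pT z) : NNReal) : ENNReal)) := rfl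
    have e1 : ∫ x, φ (T x) ∂μ = ∫ x, p x * φ (T x) := by
      rw [hwd1, integral_withDensity_eq_integral_smul hp_meas.real_toNNReal]
      congr 1
      ext x
      rw [NNReal.smul_def, Real.coe_toNNReal _ (hp_nonneg x), smul_eq_mul]
    have e2 : ∫ z, φ z ∂κ = ∫ z, pT z * φ z := by
      rw [hwd2, integral_withDensity_eq_integral_smul hpT_meas.real_toNNReal]
      refine integral_congr_ae ?_
      filter_upwards [hpT_ae_nonneg] with z hz
      rw [NNReal.smul_def, Real.coe_toNNReal _ hz, smul_eq_mul]
    rw [← e1, ← e2, ← hmap, integral_map hT.aemeasurable hφ.aestronglyMeasurable]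
  -- a.e., p x ≠ 0 → pT (T x) ≠ 0
  have hker : ∀ᵐ x, p x ≠ 0 → pT (T x) ≠ 0 := by
    have hZ : MeasurableSet {z | pT z = 0} := hpT_meas (measurableSet_singleton 0)
    have hz0 : ∫⁻ z in {z | pT z = 0}, ENNReal.ofReal (pT z) = 0 := by
      rw [setLIntegral_congr_fun (f := fun z => ENNReal.ofReal (pT z))
        (g := fun _ => (0 : ENNReal)) hZ
        (fun z hz => by simp only [Set.mem_setOf_eq] at hz; simp [hz])]
      simp
    have h0 : μ (T ⁻¹' {z | pT z = 0}) = 0 := by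
      rw [← Measure.map_apply hT hZ, hmap, hκ, withDensity_apply _ hZ, hz0]
    rw [hμ, withDensity_apply _ (hT hZ)] at h0
    have := (setLIntegral_eq_zero_iff (hT hZ) hp_meas.ennreal_ofReal).mp h0
    filter_upwards [this] with x hx hpx hTx
    have : ENNReal.ofReal (p x) = 0 := hx hTx
    rw [ENNReal.ofReal_eq_zero] at this
    exact hpx (le_antisymm this (hp_nonneg x))
  -- pointwise decompositions
  have claim1 : (fun x => p x * Real.log ((p₀ x / p₀T (T x)) * g (T x))) =ᵐ[volume]
      (fun x => p x * Real.log (g (T x) / p₀T (T x)) +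
        (p x * Real.log (p x) - p x * Real.log (p x / p₀ x))) := by
    filter_upwards [hker] with x hx
    by_cases hpx : p x = 0
    · simp [hpx]
    · have h₀ := hp_pos x hpx
      obtain ⟨hA, hB⟩ := hpT_pos (T x) (hx hpx)
      rw [Real.log_mul (by positivity) hB.ne', Real.log_div h₀.ne' hA.ne',
        Real.log_div hB.ne' hA.ne', Real.log_div hpx h₀.ne']
      ring
  have claim2 : (fun z => pT z * Real.log (g z / p₀T z)) =ᵐ[volume]
      (fun z => pT z * Real.log (pT z / p₀T z) - pT z * Real.log (pT z / g z)) := by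
    refine Filter.Eventually.of_forall fun z => ?_
    show pT z * Real.log (g z / p₀T z) =
      pT z * Real.log (pT z / p₀T z) - pT z * Real.log (pT z / g z)
    by_cases h : pT z = 0
    · simp [h]
    · obtain ⟨hA, hB⟩ := hpT_pos z h
      rw [Real.log_div hB.ne' hA.ne', Real.log_div h hA.ne', Real.log_div h hB.ne']
      ring
  have hφ : Measurable fun z => Real.log (g z / p₀T z) :=
    Real.measurable_log.comp (hg_meas.div hp₀T_meas)
  have h23 : Integrable (fun x => p x * Real.log (p x) - p x * Real.log (p x / p₀ x)) := by
    exact h2.sub h3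
  have h123 : Integrable (fun x => p x * Real.log ((p₀ x / p₀T (T x)) * g (T x)) -
      (p x * Real.log (p x) - p x * Real.log (p x / p₀ x))) := by
    exact h1.sub h23
  have hψ : Integrable fun x => p x * Real.log (g (T x) / p₀T (T x)) := by
    refine h123.congr ?_
    filter_upwards [claim1] with x hx
    linarith
  -- assemble
  rw [integral_congr_ae claim1, integral_add hψ h23, integral_sub h2 h3,
    hchange _ hφ, integral_congr_ae claim2, integral_sub h4 h5]
  simp only [klDivDens]
  ring
end
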